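/- arXiv:0906.2497 — 2 statements merged into one kernel-verified Lean document; each statement's English description precedes it below -/
import Mathlib

section
/- Every line L in ℝ³ that meets each of the three tangent lines ℓ(−1), ℓ(0), ℓ(1) (i.e. has nonempty intersection with each) is contained in the quadric Q. -/
/-- The curve γ(t) = (6t² − 1, (7/2)t³ + (3/2)t, −(1/2)t³ + (3/2)t). -/
noncomputable def gamma (t : ℝ) : Fin 3 → ℝ :=
  ![6 * t ^ 2 - 1, 7 / 2 * t ^ 3 + 3 / 2 * t, -(1 / 2) * t ^ 3 + 3 / 2 * t]

/-- The derivative γ′(t) = (12t, (21/2)t² + 3/2, −(3/2)t² + 3/2). -/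
noncomputable def gamma' (t : ℝ) : Fin 3 → ℝ :=
  ![12 * t, 21 / 2 * t ^ 2 + 3 / 2, -(3 / 2) * t ^ 2 + 3 / 2]

/-- The quadric Q = {(x,y,z) : x² − y² + z² = 1}. -/
def Quadric : Set (Fin 3 → ℝ) := {p | (p 0) ^ 2 - (p 1) ^ 2 + (p 2) ^ 2 = 1}

/-- The tangent line ℓ(t) = {γ(t) + u·γ′(t) : u ∈ ℝ}. -/
noncomputable def tangentLine (t : ℝ) : Set (Fin 3 → ℝ) :=
  {x | ∃ u : ℝ, x = gamma t + u • gamma' t}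

/-- The line {p + u·v : u ∈ ℝ} through p with direction v. -/
def lineThrough (p v : Fin 3 → ℝ) : Set (Fin 3 → ℝ) :=
  {x | ∃ u : ℝ, x = p + u • v}

lemma coords_tangent {t : ℝ} {x : Fin 3 → ℝ} (hx : x ∈ tangentLine t) :
    ∃ u : ℝ, x 0 = 6 * t ^ 2 - 1 + u * (12 * t) ∧
      x 1 = 7 / 2 * t ^ 3 + 3 / 2 * t + u * (21 / 2 * t ^ 2 + 3 / 2) ∧
      x 2 = -(1 / 2) * t ^ 3 + 3 / 2 * t + u * (-(3 / 2) * t ^ 2 + 3 / 2) := by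
  obtain ⟨u, hu⟩ := hx
  refine ⟨u, ?_, ?_, ?_⟩ <;> rw [hu] <;> simp [gamma, gamma']

lemma tangent_sub {t : ℝ} (ht : t = -1 ∨ t = 0 ∨ t = 1) :
    tangentLine t ⊆ Quadric := by
  intro x hx
  obtain ⟨u, h0, h1, h2⟩ := coords_tangent hx
  show (x 0) ^ 2 - (x 1) ^ 2 + (x 2) ^ 2 = 1
  rw [h0, h1, h2]
  rcases ht with rfl | rfl | rfl <;> ring

lemma disj_m0 {x : Fin 3 → ℝ} (ha : x ∈ tangentLine (-1)) (hb : x ∈ tangentLine 0) : False := by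
  obtain ⟨u, a0, a1, a2⟩ := coords_tangent ha
  obtain ⟨s, b0, b1, b2⟩ := coords_tangent hb
  rw [a0] at b0; rw [a1] at b1; rw [a2] at b2
  norm_num at b0 b1 b2
  linarith

lemma disj_m1 {x : Fin 3 → ℝ} (ha : x ∈ tangentLine (-1)) (hb : x ∈ tangentLine 1) : False := by
  obtain ⟨u, a0, a1, a2⟩ := coords_tangent ha
  obtain ⟨s, b0, b1, b2⟩ := coords_tangent hb
  rw [a0] at b0; rw [a1] at b1; rw [a2] at b2
  norm_num at b0 b1 b2

lemma disj_01 {x : Fin 3 → ℝ} (ha : x ∈ tangentLine 0) (hb : x ∈ tangentLine 1) : False := by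
  obtain ⟨u, a0, a1, a2⟩ := coords_tangent ha
  obtain ⟨s, b0, b1, b2⟩ := coords_tangent hb
  rw [a0] at b0; rw [a1] at b1; rw [a2] at b2
  norm_num at b0 b1 b2
  linarith

/-- Every line in ℝ³ meeting each of the tangent lines ℓ(−1), ℓ(0), ℓ(1)
is contained in the quadric Q. -/
theorem stmt_3 (p v : Fin 3 → ℝ) (hv : v ≠ 0)
    (h₁ : (lineThrough p v ∩ tangentLine (-1)).Nonempty)
    (h₂ : (lineThrough p v ∩ tangentLine 0).Nonempty)
    (h₃ : (lineThrough p v ∩ tangentLine 1).Nonempty) :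
    lineThrough p v ⊆ Quadric := by
  obtain ⟨a, ⟨u1, ha⟩, hta⟩ := h₁
  obtain ⟨b, ⟨u2, hb⟩, htb⟩ := h₂
  obtain ⟨c, ⟨u3, hc⟩, htc⟩ := h₃
  have hca : ∀ i, a i = p i + u1 * v i := fun i => by rw [ha]; simp
  have hcb : ∀ i, b i = p i + u2 * v i := fun i => by rw [hb]; simp
  have hcc : ∀ i, c i = p i + u3 * v i := fun i => by rw [hc]; simp
  have hQa : (a 0) ^ 2 - (a 1) ^ 2 + (a 2) ^ 2 = 1 := tangent_sub (Or.inl rfl) hta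
  have hQb : (b 0) ^ 2 - (b 1) ^ 2 + (b 2) ^ 2 = 1 := tangent_sub (Or.inr (Or.inl rfl)) htb
  have hQc : (c 0) ^ 2 - (c 1) ^ 2 + (c 2) ^ 2 = 1 := tangent_sub (Or.inr (Or.inr rfl)) htc
  rw [hca 0, hca 1, hca 2] at hQa
  rw [hcb 0, hcb 1, hcb 2] at hQb
  rw [hcc 0, hcc 1, hcc 2] at hQc
  have hab : u1 ≠ u2 := fun h => disj_m0 hta (by rw [ha, h, ← hb]; exact htb)
  have hac : u1 ≠ u3 := fun h => disj_m1 hta (by rw [ha, h, ← hc]; exact htc)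
  have hbc : u2 ≠ u3 := fun h => disj_01 htb (by rw [hb, h, ← hc]; exact htc)
  -- extract coefficients of the quadratic
  have h12 : (u1 - u2) * ((v 0 ^ 2 - v 1 ^ 2 + v 2 ^ 2) * (u1 + u2)
      + 2 * (p 0 * v 0 - p 1 * v 1 + p 2 * v 2)) = 0 := by
    linear_combination hQa - hQb
  have h13 : (u1 - u3) * ((v 0 ^ 2 - v 1 ^ 2 + v 2 ^ 2) * (u1 + u3)
      + 2 * (p 0 * v 0 - p 1 * v 1 + p 2 * v 2)) = 0 := by
    linear_combination hQa - hQc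
  have h12' := (mul_eq_zero.mp h12).resolve_left (sub_ne_zero.mpr hab)
  have h13' := (mul_eq_zero.mp h13).resolve_left (sub_ne_zero.mpr hac)
  have hA : v 0 ^ 2 - v 1 ^ 2 + v 2 ^ 2 = 0 := by
    have h23 : (v 0 ^ 2 - v 1 ^ 2 + v 2 ^ 2) * (u2 - u3) = 0 := by
      linear_combination h12' - h13'
    exact (mul_eq_zero.mp h23).resolve_right (sub_ne_zero.mpr hbc)
  have hB : p 0 * v 0 - p 1 * v 1 + p 2 * v 2 = 0 := by
    linear_combination h12' / 2 - (u1 + u2) / 2 * hA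
  intro x hx
  obtain ⟨u, hu⟩ := hx
  have hcx : ∀ i, x i = p i + u * v i := fun i => by rw [hu]; simp
  show (x 0) ^ 2 - (x 1) ^ 2 + (x 2) ^ 2 = 1
  rw [hcx 0, hcx 1, hcx 2]
  linear_combination hQa + (u ^ 2 - u1 ^ 2) * hA + (2 * u - 2 * u1) * hB
end

section
/- For every s ∈ (0,1), the tangent line ℓ(s) meets the quadric Q in exactly two points; that is, the set ℓ(s) ∩ Q has exactly two elements. -/
/-- For every s ∈ (0,1), the tangent line ℓ(s) meets the quadric Q in exactly
two points. -/
theorem stmt_5 (s : ℝ) (hs : s ∈ Set.Ioo (0 : ℝ) 1) :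
    (tangentLine s ∩ Quadric).ncard = 2 := by
  obtain ⟨hs0, hs1⟩ := hs
  have h1 : 1 - s ^ 2 > 0 := by nlinarith
  set r : ℝ := Real.sqrt (3 * s ^ 2 + 1) with hrdef
  have hr : r ^ 2 = 3 * s ^ 2 + 1 := Real.sq_sqrt (by nlinarith)
  have hrpos : r > 0 := Real.sqrt_pos.mpr (by nlinarith)
  set A : ℝ := 108 * s ^ 2 * (1 - s ^ 2) with hAdef
  have hA : A > 0 := by positivity
  have hA' : A ≠ 0 := ne_of_gt hA
  obtain ⟨u1, hu1⟩ : ∃ x : ℝ,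
      x = (24 * s * (3 * s ^ 2 - 1) * (s ^ 2 - 1) + 24 * s * (1 - s ^ 2) * r) / (2 * A) := ⟨_, rfl⟩
  obtain ⟨u2, hu2⟩ : ∃ x : ℝ,
      x = (24 * s * (3 * s ^ 2 - 1) * (s ^ 2 - 1) - 24 * s * (1 - s ^ 2) * r) / (2 * A) := ⟨_, rfl⟩
  have hsub : u1 - u2 = (24 * s * (1 - s ^ 2) * r) / A := by
    rw [hu1, hu2]
    field_simp
    ring
  have hne : u1 ≠ u2 := by
    intro h
    have : u1 - u2 = 0 := by rw [h]; ring
    rw [hsub] at this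
    have hpos : (24 * s * (1 - s ^ 2) * r) / A > 0 := by positivity
    linarith
  have hsum : A * (u1 + u2) = 24 * s * (3 * s ^ 2 - 1) * (s ^ 2 - 1) := by
    rw [hu1, hu2]
    field_simp
    ring
  have hprod : A * (u1 * u2) = -12 * s ^ 2 * (s ^ 2 - 1) ^ 2 := by
    have h0 : (24 * s * (3 * s ^ 2 - 1) * (s ^ 2 - 1) + 24 * s * (1 - s ^ 2) * r) *
        (24 * s * (3 * s ^ 2 - 1) * (s ^ 2 - 1) - 24 * s * (1 - s ^ 2) * r)
        = (-12 * s ^ 2 * (s ^ 2 - 1) ^ 2) * (4 * A) := by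
      rw [hAdef]
      linear_combination (-576 * s ^ 2 * (1 - s ^ 2) ^ 2) * hr
    have h4A : (4 * A) ≠ 0 := by positivity
    rw [hu1, hu2, div_mul_div_comm, h0]
    field_simp
    ring
  have key : ∀ u : ℝ, (gamma s + u • gamma' s ∈ Quadric) ↔ (u = u1 ∨ u = u2) := by
    intro u
    have hid : (gamma s + u • gamma' s) 0 ^ 2 - (gamma s + u • gamma' s) 1 ^ 2
        + (gamma s + u • gamma' s) 2 ^ 2 - 1 = A * (u - u1) * (u - u2) := by
      show (gamma s 0 + u * gamma' s 0) ^ 2 - (gamma s 1 + u * gamma' s 1) ^ 2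
        + (gamma s 2 + u * gamma' s 2) ^ 2 - 1 = A * (u - u1) * (u - u2)
      simp only [gamma, gamma', Matrix.cons_val_zero, Matrix.cons_val_one, Matrix.head_cons,
        Matrix.cons_val_two, Matrix.tail_cons]
      linear_combination u * hsum - hprod
    simp only [Quadric, Set.mem_setOf_eq]
    constructor
    · intro h
      have h0 : A * (u - u1) * (u - u2) = 0 := by rw [← hid]; linarith
      rcases mul_eq_zero.mp h0 with h' | h'
      · rcases mul_eq_zero.mp h' with h'' | h''
        · exact absurd h'' hA'
        · left; linarith [sub_eq_zero.mp h'']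
      · right; linarith [sub_eq_zero.mp h']
    · rintro (rfl | rfl) <;> nlinarith [hid]
  have hset : tangentLine s ∩ Quadric =
      {gamma s + u1 • gamma' s, gamma s + u2 • gamma' s} := by
    ext x
    simp only [tangentLine, Set.mem_inter_iff, Set.mem_setOf_eq, Set.mem_insert_iff,
      Set.mem_singleton_iff]
    constructor
    · rintro ⟨⟨u, rfl⟩, hx⟩
      rcases (key u).mp hx with rfl | rfl
      · left; rfl
      · right; rfl
    · rintro (rfl | rfl)
      · exact ⟨⟨u1, rfl⟩, (key u1).mpr (Or.inl rfl)⟩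
      · exact ⟨⟨u2, rfl⟩, (key u2).mpr (Or.inr rfl)⟩
  rw [hset]
  apply Set.ncard_pair
  intro h
  have := congrFun h 1
  simp only [Pi.add_apply, Pi.smul_apply, smul_eq_mul, gamma', Matrix.cons_val_one,
    Matrix.head_cons, Matrix.cons_val_zero] at this
  have hc : (21 / 2 * s ^ 2 + 3 / 2 : ℝ) > 0 := by positivity
  apply hne
  have : u1 * (21 / 2 * s ^ 2 + 3 / 2) = u2 * (21 / 2 * s ^ 2 + 3 / 2) := by linarith
  exact mul_right_cancel₀ (ne_of_gt hc) this
end
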